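/- Jensen lower bound for WMD: if the ground cost is Euclidean distance, then WMD between weighted point sets (a,f_a) and (b,f_b) is at least the Euclidean distance between their weighted means: WMD ≥ ‖Σ_i f_a(i) a_i − Σ_j f_b(j) b_j‖. -/
import Mathlib


open Finset

/-- Jensen lower bound: the distance between weighted means
lower-bounds the WMD with Euclidean ground cost. -/
theorem wmd_ge_dist_of_means {d m k : ℕ}
    (a : Fin m → EuclideanSpace ℝ (Fin d)) (b : Fin k → EuclideanSpace ℝ (Fin d))
    (fa : Fin m → ℝ) (fb : Fin k → ℝ)
    (hfa0 : ∀ i, 0 ≤ fa i) (hfb0 : ∀ j, 0 ≤ fb j)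
    (hfa1 : ∑ i, fa i = 1) (hfb1 : ∑ j, fb j = 1) :
    ‖(∑ i, fa i • a i) - (∑ j, fb j • b j)‖
      ≤ sInf {c : ℝ | ∃ F : Fin m → Fin k → ℝ,
          (∀ i j, 0 ≤ F i j) ∧ (∀ i, ∑ j, F i j = fa i) ∧
          (∀ j, ∑ i, F i j = fb j) ∧
          c = ∑ i, ∑ j, ‖a i - b j‖ * F i j} := by
  apply le_csInf
  · exact ⟨_, fun i j => fa i * fb j, fun i j => mul_nonneg (hfa0 i) (hfb0 j),
      fun i => by rw [← Finset.mul_sum, hfb1, mul_one],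
      fun j => by rw [← Finset.sum_mul, hfa1, one_mul], rfl⟩
  · rintro c ⟨F, hF0, hFa, hFb, rfl⟩
    have key : (∑ i, fa i • a i) - (∑ j, fb j • b j)
        = ∑ i, ∑ j, F i j • (a i - b j) := by
      simp only [smul_sub, Finset.sum_sub_distrib]
      congr 1
      · exact Finset.sum_congr rfl fun i _ => by
          rw [← Finset.sum_smul, hFa i]
      · rw [Finset.sum_comm]
        exact Finset.sum_congr rfl fun j _ => by
          rw [← Finset.sum_smul, hFb j]
    rw [key]
    calc ‖∑ i, ∑ j, F i j • (a i - b j)‖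
        ≤ ∑ i, ‖∑ j, F i j • (a i - b j)‖ := norm_sum_le _ _
      _ ≤ ∑ i, ∑ j, ‖F i j • (a i - b j)‖ :=
          Finset.sum_le_sum fun i _ => norm_sum_le _ _
      _ = ∑ i, ∑ j, ‖a i - b j‖ * F i j := by
          refine Finset.sum_congr rfl fun i _ => Finset.sum_congr rfl fun j _ => ?_
          rw [norm_smul, Real.norm_of_nonneg (hF0 i j), mul_comm]
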